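/- If X is a coreflexive Banach space, then every closed subspace Y of X is coreflexive. -/

import Mathlib

open NormedSpace Filter Topology
open scoped ENNReal

set_option maxHeartbeats 2000000

noncomputable section

/-- The annihilator of a subspace `Y ⊆ X` inside the continuous dual of `X`. -/
def annih {X : Type*} [SeminormedAddCommGroup X] [NormedSpace ℝ X] (Y : Submodule ℝ X) :
    Submodule ℝ (StrongDual ℝ X) where
  carrier := {f | ∀ y ∈ Y, f y = 0}
  add_mem' := by
    intro a b ha hb y hy
    simp [ha y hy, hb y hy]
  zero_mem' := by intro y hy; rfl
  smul_mem' := by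
    intro c f hf y hy
    simp [hf y hy]

/-- A Banach space is reflexive iff the canonical embedding into its bidual is surjective. -/
def BReflexive (X : Type*) [SeminormedAddCommGroup X] [NormedSpace ℝ X] : Prop :=
  Function.Surjective (inclusionInDoubleDual ℝ X)

/-- A Banach space is coreflexive iff `X**/J_X(X)` is reflexive. -/
def Coreflexive (X : Type*) [SeminormedAddCommGroup X] [NormedSpace ℝ X] : Prop :=
  @BReflexive ((StrongDual ℝ (StrongDual ℝ X)) ⧸ LinearMap.range (inclusionInDoubleDual ℝ X).toLinearMap)
    (@Submodule.Quotient.seminormedAddCommGroup (StrongDual ℝ (StrongDual ℝ X)) _ ℝ _ _ _)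
    (@Submodule.Quotient.normedSpace (StrongDual ℝ (StrongDual ℝ X)) _ ℝ _ _ _ ℝ _ _ _ _)

/-- The adjoint of a continuous linear map between normed spaces. -/
def adj {E F : Type*} [SeminormedAddCommGroup E] [NormedSpace ℝ E]
    [SeminormedAddCommGroup F] [NormedSpace ℝ F] (f : E →L[ℝ] F) :
    StrongDual ℝ F →L[ℝ] StrongDual ℝ E :=
  (ContinuousLinearMap.compL ℝ E F ℝ).flip f

/-- `X` is weak*-sequentially dense in its bidual. -/
def WStarSeqDense (X : Type*) [SeminormedAddCommGroup X] [NormedSpace ℝ X] : Prop :=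
  ∀ F : StrongDual ℝ (StrongDual ℝ X), ∃ x : ℕ → X, ∀ f : StrongDual ℝ X,
    Tendsto (fun n => inclusionInDoubleDual ℝ X (x n) f) atTop (𝓝 (F f))

/-- `x` is a point of weak-to-norm continuity of the closed unit ball of `X`. -/
def wPC (X : Type*) [SeminormedAddCommGroup X] [NormedSpace ℝ X] (x : X) : Prop :=
  ∀ l : Filter X, (∀ᶠ y in l, ‖y‖ ≤ 1) →
    (∀ f : StrongDual ℝ X, Tendsto (fun y => f y) l (𝓝 (f x))) →
    Tendsto id l (𝓝 x)

/-- The continuous dual, with the instances taken from the norm. -/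
abbrev Dual (𝕜 : Type*) (E : Type*) [NontriviallyNormedField 𝕜] [SeminormedAddCommGroup E]
    [NormedSpace 𝕜 E] : Type _ :=
  StrongDual 𝕜 E

section Aux

open Metric

variable {W : Type*} [SeminormedAddCommGroup W] [NormedSpace ℝ W]

theorem sep_aux {Z : Submodule ℝ W} (hZ : IsClosed (Z : Set W)) {w : W} (hw : w ∉ Z) :
    ∃ f : Dual ℝ W, (∀ z ∈ Z, f z = 0) ∧ f w ≠ 0 := by
  obtain ⟨f, u, hfw, hu⟩ := geometric_hahn_banach_point_closed Z.convex hZ hw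
  have hu0 : u < 0 := by simpa using hu 0 Z.zero_mem
  refine ⟨f, fun z hz => ?_, by nlinarith⟩
  by_contra h
  have h1 := hu (((u - 1) / f z) • z) (Z.smul_mem _ hz)
  rw [map_smul, smul_eq_mul, div_mul_cancel₀ _ h] at h1
  linarith

theorem mem_of_forall_dual {Z : Submodule ℝ W} (hZ : IsClosed (Z : Set W)) {w : W}
    (h : ∀ f : Dual ℝ W, (∀ z ∈ Z, f z = 0) → f w = 0) : w ∈ Z := by
  by_contra hw
  obtain ⟨f, hf0, hfw⟩ := sep_aux hZ hw
  exact hfw (h f hf0)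

theorem exists_norming {W : Type*} [NormedAddCommGroup W] [NormedSpace ℝ W]
    (Z : Submodule ℝ W) (hZ : IsClosed (Z : Set W)) (x : W) :
    ∃ f : Dual ℝ W, ‖f‖ ≤ 1 ∧ (∀ z ∈ Z, f z = 0) ∧
      f x = ‖(Submodule.Quotient.mk x : W ⧸ Z)‖ := by
  haveI : IsClosed ((Z.toAddSubgroup : AddSubgroup W) : Set W) := hZ
  by_cases hx : x ∈ Z
  · refine ⟨0, by simp, by simp, ?_⟩
    rw [show (Submodule.Quotient.mk x : W ⧸ Z) = 0 from (Submodule.Quotient.mk_eq_zero Z).2 hx]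
    simp
  · have hne : (Submodule.Quotient.mk x : W ⧸ Z) ≠ 0 := by
      simpa [Submodule.Quotient.mk_eq_zero] using hx
    obtain ⟨g, hg1, hgx⟩ := exists_dual_vector ℝ _ (norm_ne_zero_iff.mpr hne)
    set π : W →L[ℝ] (W ⧸ Z) := LinearMap.mkContinuous Z.mkQ 1
      (fun m => by simpa using Submodule.Quotient.norm_mk_le Z m)
    refine ⟨g.comp π, ?_, fun z hz => ?_, ?_⟩
    · refine (g.comp π).opNorm_le_bound zero_le_one fun m => ?_
      calc ‖g (π m)‖ ≤ ‖g‖ * ‖π m‖ := g.le_opNorm _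
        _ ≤ 1 * ‖m‖ := by
            rw [hg1, one_mul, one_mul]
            exact Submodule.Quotient.norm_mk_le Z m
    · show g (π z) = 0
      have h0 : π z = 0 := (Submodule.Quotient.mk_eq_zero Z).2 hz
      rw [h0, map_zero]
    · exact hgx

variable {A B : Type*} [SeminormedAddCommGroup A] [NormedSpace ℝ A]
  [SeminormedAddCommGroup B] [NormedSpace ℝ B]

theorem adj_surjective (T : A →L[ℝ] B) {c : ℝ} (hc : 0 < c)
    (hT : ∀ a, c * ‖a‖ ≤ ‖T a‖) : Function.Surjective (adj T) := by
  intro g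
  have key : ∀ a a' : A, T a = T a' → g a = g a' := by
    intro a a' h
    have h0 : ‖a - a'‖ = 0 := by
      have := hT (a - a')
      rw [map_sub, h, sub_self, norm_zero] at this
      nlinarith [norm_nonneg (a - a')]
    have h2 : ‖g a - g a'‖ = 0 := by
      rw [← map_sub]
      have := g.le_opNorm (a - a')
      rw [h0, mul_zero] at this
      exact le_antisymm this (norm_nonneg _)
    have := norm_eq_zero.mp h2
    linarith [sub_eq_zero.mp this]
  set Z : Submodule ℝ B := LinearMap.range T.toLinearMap with hZdef
  have hmem : ∀ b : Z, ∃ a : A, T a = (b : B) := fun b => b.2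
  set s : Z → A := fun b => Classical.choose (hmem b) with hs
  have hsT : ∀ b : Z, T (s b) = (b : B) := fun b => Classical.choose_spec (hmem b)
  have hadd : ∀ b b' : Z, g (s (b + b')) = g (s b) + g (s b') := by
    intro b b'
    have h3 : T (s (b + b')) = T (s b + s b') := by
      rw [map_add, hsT, hsT, hsT]; rfl
    rw [key _ _ h3, map_add]
  have hsmul : ∀ (r : ℝ) (b : Z), g (s (r • b)) = r * g (s b) := by
    intro r b
    have h3 : T (s (r • b)) = T (r • s b) := by
      rw [map_smul, hsT, hsT]; rfl
    rw [key _ _ h3, map_smul]; rfl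
  set φ₀ : Z →ₗ[ℝ] ℝ :=
    { toFun := fun b => g (s b), map_add' := hadd, map_smul' := hsmul } with hφ₀
  have hbound : ∀ b : Z, ‖φ₀ b‖ ≤ (‖g‖ / c) * ‖b‖ := by
    intro b
    show ‖g (s b)‖ ≤ _
    calc ‖g (s b)‖ ≤ ‖g‖ * ‖s b‖ := g.le_opNorm _
      _ ≤ (‖g‖ / c) * ‖(b : B)‖ := by
          rw [← hsT b, div_mul_eq_mul_div, le_div_iff₀ hc]
          nlinarith [hT (s b), norm_nonneg g, norm_nonneg (s b)]
      _ = (‖g‖ / c) * ‖b‖ := rfl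
  set φ : Z →L[ℝ] ℝ := LinearMap.mkContinuous φ₀ (‖g‖ / c) hbound
  obtain ⟨f, hf, -⟩ := exists_extension_norm_eq Z φ
  refine ⟨f, ContinuousLinearMap.ext fun a => ?_⟩
  show f (T a) = g a
  have h4 : f (T a) = f ((⟨T a, LinearMap.mem_range_self _ a⟩ : Z) : B) := rfl
  rw [h4, hf]
  exact key _ _ (hsT ⟨T a, LinearMap.mem_range_self _ a⟩)

theorem isClosed_range_of_bddBelow [CompleteSpace A] [T0Space B] (T : A →L[ℝ] B) {c : ℝ}
    (hc : 0 < c) (hT : ∀ a, c * ‖a‖ ≤ ‖T a‖) :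
    IsClosed ((LinearMap.range T.toLinearMap : Submodule ℝ B) : Set B) := by
  have hanti : AntilipschitzWith (⟨c, hc.le⟩ : NNReal)⁻¹ T := by
    apply AntilipschitzWith.of_le_mul_dist
    intro x y
    have h1 := hT (x - y)
    rw [map_sub] at h1
    rw [dist_eq_norm, dist_eq_norm]
    change ‖x - y‖ ≤ c⁻¹ * ‖T x - T y‖
    rw [inv_mul_eq_div,
      le_div_iff₀ hc, mul_comm]
    exact h1
  have h1 : IsComplete (Set.range T) := hanti.isComplete_range T.uniformContinuous
  have h2 : ((LinearMap.range T.toLinearMap : Submodule ℝ B) : Set B) = Set.range T := by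
    ext b; simp [LinearMap.mem_range]
  rw [h2]
  exact h1.isClosed

theorem breflexive_of_embed [CompleteSpace A] (hB : BReflexive B)
    (hsep : ∀ b : B, ‖b‖ = 0 → b = 0)
    (T : A →L[ℝ] B) {c : ℝ} (hc : 0 < c) (hT : ∀ a, c * ‖a‖ ≤ ‖T a‖) : BReflexive A := by
  haveI : T0Space B := by
    refine ⟨fun a b h => ?_⟩
    have hd : dist a b = 0 := Metric.inseparable_iff.1 h
    rw [dist_eq_norm] at hd
    exact sub_eq_zero.mp (hsep _ hd)
  have hclosed : IsClosed ((LinearMap.range T.toLinearMap : Submodule ℝ B) : Set B) :=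
    isClosed_range_of_bddBelow T hc hT
  intro G
  obtain ⟨b, hb⟩ := hB (adj (adj T) G)
  have hbmem : b ∈ LinearMap.range T.toLinearMap := by
    apply mem_of_forall_dual hclosed
    intro f hf0
    have hTf : adj T f = 0 := by
      ext a
      exact hf0 (T a) (LinearMap.mem_range_self _ a)
    calc f b = inclusionInDoubleDual ℝ B b f := rfl
      _ = G (adj T f) := by rw [hb]; rfl
      _ = 0 := by rw [hTf, map_zero]
  obtain ⟨a, ha⟩ := hbmem
  refine ⟨a, ContinuousLinearMap.ext fun g => ?_⟩
  obtain ⟨f, hf⟩ := adj_surjective T hc hT g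
  show g a = G g
  calc g a = f (T a) := by rw [← hf]; rfl
    _ = f b := by exact congrArg f ha
    _ = inclusionInDoubleDual ℝ B b f := rfl
    _ = G (adj T f) := by rw [hb]; rfl
    _ = G g := by rw [hf]

end Aux

theorem stmt10 (X : Type*) [NormedAddCommGroup X] [NormedSpace ℝ X] [CompleteSpace X]
    (hX : Coreflexive X) (Y : Submodule ℝ X) (hY : IsClosed (Y : Set X)) :
    Coreflexive ↥Y := by
  classical
  haveI : CompleteSpace Y := IsClosed.completeSpace_coe (hs := hY)
  set i : Y →L[ℝ] X := Y.subtypeL with hi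
  set JX : X →L[ℝ] Dual ℝ (Dual ℝ X) := inclusionInDoubleDual ℝ X with hJX
  set JY : Y →L[ℝ] Dual ℝ (Dual ℝ Y) := inclusionInDoubleDual ℝ (↥Y) with hJY
  -- naturality
  have hnat : ∀ y : Y, adj (adj i) (JY y) = JX (i y) :=
    fun y => ContinuousLinearMap.ext fun f => rfl
  -- surjectivity of the restriction map with norm control
  have hrestr : ∀ g : Dual ℝ (↥Y), ∃ f : Dual ℝ X, adj i f = g ∧ ‖f‖ = ‖g‖ := by
    intro g
    obtain ⟨f, hf, hnorm⟩ := exists_extension_norm_eq Y g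
    exact ⟨f, ContinuousLinearMap.ext fun y => hf y, hnorm⟩
  -- the double adjoint of the inclusion is an isometry
  have hIle : ∀ F : Dual ℝ (Dual ℝ (↥Y)), ‖adj (adj i) F‖ ≤ ‖F‖ := by
    intro F
    refine (adj (adj i) F).opNorm_le_bound (norm_nonneg F) fun f => ?_
    calc ‖adj (adj i) F f‖ = ‖F (adj i f)‖ := rfl
      _ ≤ ‖F‖ * ‖adj i f‖ := F.le_opNorm _
      _ ≤ ‖F‖ * ‖f‖ := by
          refine mul_le_mul_of_nonneg_left ?_ (norm_nonneg F)
          refine (adj i f).opNorm_le_bound (norm_nonneg f) fun y => ?_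
          calc ‖adj i f y‖ = ‖f (i y)‖ := rfl
            _ ≤ ‖f‖ * ‖(i y : X)‖ := f.le_opNorm _
            _ = ‖f‖ * ‖y‖ := rfl
  have hIge : ∀ F : Dual ℝ (Dual ℝ (↥Y)), ‖F‖ ≤ ‖adj (adj i) F‖ := by
    intro F
    refine F.opNorm_le_bound (norm_nonneg _) fun g => ?_
    obtain ⟨f, hfg, hfnorm⟩ := hrestr g
    calc ‖F g‖ = ‖F (adj i f)‖ := by rw [hfg]
      _ = ‖adj (adj i) F f‖ := rfl
      _ ≤ ‖adj (adj i) F‖ * ‖f‖ := (adj (adj i) F).le_opNorm _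
      _ = ‖adj (adj i) F‖ * ‖g‖ := by rw [hfnorm]
  -- the range of JX is closed
  have hJXlow : ∀ x : X, (1:ℝ) * ‖x‖ ≤ ‖JX x‖ := by
    intro x
    rw [one_mul]
    exact ((inclusionInDoubleDualLi ℝ (E := X)).norm_map x).symm.le
  have hJXcl : IsClosed ((LinearMap.range JX.toLinearMap : Submodule ℝ (Dual ℝ (Dual ℝ X))) :
      Set (Dual ℝ (Dual ℝ X))) :=
    isClosed_range_of_bddBelow JX one_pos hJXlow
  -- the target quotient has definite norm
  set B := Dual ℝ (Dual ℝ X) ⧸ LinearMap.range JX.toLinearMap with hB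
  have hsepB : ∀ b : B, ‖b‖ = 0 → b = 0 := by
    intro b hb
    obtain ⟨F, rfl⟩ := Submodule.Quotient.mk_surjective _ b
    rw [Submodule.Quotient.mk_eq_zero]
    have h1 : F ∈ closure ((LinearMap.range JX.toLinearMap : Submodule ℝ (Dual ℝ (Dual ℝ X))) :
        Set (Dual ℝ (Dual ℝ X))) :=
      (QuotientAddGroup.norm_mk_eq_zero_iff_mem_closure (S := (LinearMap.range JX.toLinearMap).toAddSubgroup) (m := F)).1 hb
    rwa [hJXcl.closure_eq] at h1
  -- the quotient projection as a continuous linear map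
  set π : Dual ℝ (Dual ℝ X) →L[ℝ] B := LinearMap.mkContinuous (E := Dual ℝ (Dual ℝ X)) (F := B) (LinearMap.range JX.toLinearMap).mkQ 1
    (fun m => by rw [one_mul]; exact Submodule.Quotient.norm_mk_le _ m) with hπ
  set Φ : Dual ℝ (Dual ℝ (↥Y)) →L[ℝ] B := π.comp (adj (adj i)) with hΦ
  have hπmk : ∀ m : Dual ℝ (Dual ℝ X), π m = Submodule.Quotient.mk m := fun m => rfl
  have hΦapp : ∀ F : Dual ℝ (Dual ℝ (↥Y)),
      Φ F = Submodule.Quotient.mk (adj (adj i) F) := by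
    intro F
    rw [hΦ, ContinuousLinearMap.comp_apply, hπmk]
  have hker : LinearMap.range JY.toLinearMap ≤ LinearMap.ker (Φ : Dual ℝ (Dual ℝ (↥Y)) →ₗ[ℝ] B) := by
    rintro F ⟨y, rfl⟩
    show Φ (JY y) = 0
    rw [hΦapp, hnat y, Submodule.Quotient.mk_eq_zero]
    exact LinearMap.mem_range_self _ _
  set T₀ : (Dual ℝ (Dual ℝ (↥Y)) ⧸ LinearMap.range JY.toLinearMap) →ₗ[ℝ] B :=
    Submodule.liftQ _ (Φ : Dual ℝ (Dual ℝ (↥Y)) →ₗ[ℝ] B) hker with hT₀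
  have hT₀mk : ∀ F : Dual ℝ (Dual ℝ (↥Y)), T₀ (Submodule.Quotient.mk F) = Φ F :=
    fun F => Submodule.liftQ_apply _ _ F
  have hT₀bd : ∀ q, ‖T₀ q‖ ≤ 1 * ‖q‖ := by
    intro q
    rw [one_mul]
    refine le_of_forall_pos_le_add fun ε hε => ?_
    obtain ⟨m, hm, hmlt⟩ := Submodule.Quotient.norm_mk_lt q hε
    calc ‖T₀ q‖ = ‖Φ m‖ := by rw [← hm, hT₀mk]
      _ ≤ ‖adj (adj i) m‖ := by
          rw [hΦapp]
          exact Submodule.Quotient.norm_mk_le _ _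
      _ ≤ ‖m‖ := hIle m
      _ ≤ ‖q‖ + ε := hmlt.le
  set T : (Dual ℝ (Dual ℝ (↥Y)) ⧸ LinearMap.range JY.toLinearMap) →L[ℝ] B :=
    LinearMap.mkContinuous (E := Dual ℝ (Dual ℝ (↥Y)) ⧸ LinearMap.range JY.toLinearMap) (F := B) T₀ 1 hT₀bd with hT
  have hTmk : ∀ F : Dual ℝ (Dual ℝ (↥Y)), T (Submodule.Quotient.mk F) = Φ F := by
    intro F
    have h0 : T (Submodule.Quotient.mk F) = T₀ (Submodule.Quotient.mk F) := rfl
    rw [h0, hT₀mk]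
  -- T is bounded below
  have hlow : ∀ q, (1/2 : ℝ) * ‖q‖ ≤ ‖T q‖ := by
    intro q
    have hmain : ‖q‖ ≤ 2 * ‖T q‖ := by
      refine le_of_forall_pos_le_add fun ε hε => ?_
      have hε3 : 0 < ε / 3 := by linarith
      obtain ⟨F, hF⟩ := Submodule.Quotient.mk_surjective _ q
      obtain ⟨H, hH, hHlt⟩ := Submodule.Quotient.norm_mk_lt (T q) hε3
      have hTq : T q = Submodule.Quotient.mk (adj (adj i) F) := by
        rw [← hF, hTmk, hΦapp]
      have hdiff : adj (adj i) F - H ∈ LinearMap.range JX.toLinearMap := by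
        rw [hTq] at hH
        exact (Submodule.Quotient.eq _).1 hH.symm
      obtain ⟨x, hx⟩ : ∃ x, JX x = adj (adj i) F - H := hdiff
      obtain ⟨f, hf1, hf0, hfx⟩ := exists_norming Y hY x
      have hiF : adj (adj i) F f = 0 := by
        show F (adj i f) = 0
        have h0 : adj i f = 0 := ContinuousLinearMap.ext fun y => hf0 y y.2
        rw [h0, map_zero]
      have hxY : ‖(Submodule.Quotient.mk x : X ⧸ Y)‖ ≤ ‖H‖ := by
        rw [← hfx]
        have h1 : f x = -(H f) := by
          have h2 : JX x f = (adj (adj i) F - H) f := by rw [hx]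
          rw [ContinuousLinearMap.sub_apply, hiF, zero_sub] at h2
          exact h2
        calc f x = -(H f) := h1
          _ ≤ ‖H f‖ := by rw [Real.norm_eq_abs]; exact neg_le_abs _
          _ ≤ ‖H‖ * ‖f‖ := H.le_opNorm f
          _ ≤ ‖H‖ * 1 := by
              exact mul_le_mul_of_nonneg_left hf1 (norm_nonneg H)
          _ = ‖H‖ := mul_one _
      obtain ⟨m, hm, hmlt⟩ :=
        Submodule.Quotient.norm_mk_lt (Submodule.Quotient.mk x : X ⧸ Y) hε3
      have hy : x - m ∈ Y := by
        have h1 := (Submodule.Quotient.eq Y).1 hm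
        simpa using Y.neg_mem h1
      set y : Y := ⟨x - m, hy⟩ with hydef
      have hq : ‖q‖ ≤ ‖F - JY y‖ := by
        have h1 : (Submodule.Quotient.mk (F - JY y) :
            Dual ℝ (Dual ℝ (↥Y)) ⧸ LinearMap.range JY.toLinearMap) = Submodule.Quotient.mk F := by
          rw [Submodule.Quotient.eq]
          simpa using LinearMap.mem_range_self (JY : ↥Y →ₗ[ℝ] Dual ℝ (Dual ℝ (↥Y))) (-y)
        rw [← hF, ← h1]
        exact Submodule.Quotient.norm_mk_le _ _
      have hbd : ‖F - JY y‖ ≤ ‖H‖ + ‖m‖ := by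
        calc ‖F - JY y‖ ≤ ‖adj (adj i) (F - JY y)‖ := hIge _
          _ = ‖adj (adj i) F - JX (i y)‖ := by rw [map_sub, hnat]
          _ = ‖adj (adj i) F - (JX x - JX m)‖ := by
              rw [show (i y : X) = x - m from rfl, map_sub]
          _ = ‖(adj (adj i) F - JX x) + JX m‖ := by congr 1; abel
          _ ≤ ‖adj (adj i) F - JX x‖ + ‖JX m‖ := norm_add_le _ _
          _ ≤ ‖H‖ + ‖m‖ := by
              have h2 : adj (adj i) F - JX x = H := by
                rw [hx]; abel
              rw [h2]
              exact add_le_add_right (double_dual_bound ℝ X m) _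
      have hmH : ‖m‖ < ‖H‖ + ε / 3 := lt_of_lt_of_le hmlt (by linarith [hxY])
      calc ‖q‖ ≤ ‖F - JY y‖ := hq
        _ ≤ ‖H‖ + ‖m‖ := hbd
        _ ≤ 2 * ‖H‖ + ε / 3 := by linarith
        _ ≤ 2 * ‖T q‖ + ε := by linarith [hHlt]
    linarith
  exact breflexive_of_embed (A := Dual ℝ (Dual ℝ (↥Y)) ⧸ LinearMap.range JY.toLinearMap) (B := B) hX hsepB T (by norm_num : (0:ℝ) < 1/2) hlow
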